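/- Let p0 ∈ (1,∞) and Ŷ_{p0} be the second generation space with τ_n = ⌊(n+1)^{p0}/n⌋ and F(n,i) = n. Then M is of strong type (p0,p0): ‖Mf‖_{p0}^{p0} ≤ (4 + 2·3^{p0+1}) ‖f‖_{p0}^{p0} for all f ∈ ℓ^{p0}. -/

import Mathlib

open scoped ENNReal Classical
open Filter Set

/-- The point set of a second generation space: roots `y_n`, middle points
`y_{n,i}` and top points `y'_{n,i}` (`i` among `τ n` per branch). -/
abbrev YPt (τ : ℕ → ℕ) := ℕ ⊕ ((Σ n : ℕ, Fin (τ n)) ⊕ (Σ n : ℕ, Fin (τ n)))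

namespace SecondGen

/-- The root `y_n`. -/
def root (τ : ℕ → ℕ) (n : ℕ) : YPt τ := Sum.inl n

/-- The middle point `y_{n,i}`. -/
def mid (τ : ℕ → ℕ) (n : ℕ) (i : Fin (τ n)) : YPt τ := Sum.inr (Sum.inl ⟨n, i⟩)

/-- The top point `y'_{n,i}`. -/
def top (τ : ℕ → ℕ) (n : ℕ) (i : Fin (τ n)) : YPt τ := Sum.inr (Sum.inr ⟨n, i⟩)

/-- The triple `{y_n} ∪ T_{n,i} = {y_n, y_{n,i}, y'_{n,i}}`. -/
def triple (τ : ℕ → ℕ) (n : ℕ) (i : Fin (τ n)) : Set (YPt τ) :=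
  {root τ n, mid τ n i, top τ n i}

/-- The pair `T_{n,i} = {y_{n,i}, y'_{n,i}}`. -/
def pairB (τ : ℕ → ℕ) (n : ℕ) (i : Fin (τ n)) : Set (YPt τ) :=
  {mid τ n i, top τ n i}

/-- The lower part of a branch, `T_n \ T_n' = {y_n, y_{n,1}, …, y_{n,τ_n}}`. -/
def low (τ : ℕ → ℕ) (n : ℕ) : Set (YPt τ) :=
  {x | x = root τ n ∨ ∃ i, x = mid τ n i}

/-- The full branch `T_n`. -/
def branch (τ : ℕ → ℕ) (n : ℕ) : Set (YPt τ) :=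
  {x | x = root τ n ∨ (∃ i, x = mid τ n i) ∨ ∃ i, x = top τ n i}

/-- The collection of all open balls of `Y_τ`. -/
def balls (τ : ℕ → ℕ) : Set (Set (YPt τ)) :=
  {B | (∃ x, B = {x}) ∨ (∃ n i, B = triple τ n i) ∨ (∃ n i, B = pairB τ n i) ∨
       (∃ n, B = low τ n) ∨ B = Set.univ}

/-- The ball `B(y, 3/2)` centered at `y`. -/
def cball (τ : ℕ → ℕ) : YPt τ → Set (YPt τ)
  | Sum.inl n => low τ n
  | Sum.inr (Sum.inl ⟨n, i⟩) => triple τ n i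
  | Sum.inr (Sum.inr ⟨n, i⟩) => pairB τ n i

/-- The weights: `μ({y_n}) = d n`, `μ({y_{n,i}}) = d n / τ n`,
`μ({y'_{n,i}}) = d n * F n i`. -/
noncomputable def weight (τ : ℕ → ℕ) (d : ℕ → ℝ≥0∞)
    (F : (n : ℕ) → Fin (τ n) → ℝ≥0∞) : YPt τ → ℝ≥0∞
  | Sum.inl n => d n
  | Sum.inr (Sum.inl ⟨n, _⟩) => d n / (τ n : ℝ≥0∞)
  | Sum.inr (Sum.inr ⟨n, i⟩) => d n * F n i

/-- Measure of a set. -/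
noncomputable def mass {τ : ℕ → ℕ} (w : YPt τ → ℝ≥0∞) (s : Set (YPt τ)) : ℝ≥0∞ :=
  ∑' x : s, w x.1

/-- Average of `f` over `s`. -/
noncomputable def avg {τ : ℕ → ℕ} (w f : YPt τ → ℝ≥0∞) (s : Set (YPt τ)) : ℝ≥0∞ :=
  (∑' x : s, f x.1 * w x.1) / mass w s

/-- The centered Hardy–Littlewood maximal operator of `Y_τ`. -/
noncomputable def Mc {τ : ℕ → ℕ} (w f : YPt τ → ℝ≥0∞) (x : YPt τ) : ℝ≥0∞ :=
  avg w f {x} ⊔ avg w f (cball τ x) ⊔ avg w f Set.univ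

/-- The non-centered Hardy–Littlewood maximal operator of `Y_τ`. -/
noncomputable def Mnc {τ : ℕ → ℕ} (w f : YPt τ → ℝ≥0∞) (x : YPt τ) : ℝ≥0∞ :=
  ⨆ (B : Set (YPt τ)) (_ : B ∈ balls τ) (_ : x ∈ B), avg w f B

/-- `‖f‖_p^p`. -/
noncomputable def lpp {τ : ℕ → ℕ} (w : YPt τ → ℝ≥0∞) (p : ℝ) (f : YPt τ → ℝ≥0∞) : ℝ≥0∞ :=
  ∑' x, f x ^ p * w x

/-- Strong type `(p,p)` (on the level of `p`-th powers). -/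
def strongT {τ : ℕ → ℕ} (w : YPt τ → ℝ≥0∞)
    (T : (YPt τ → ℝ≥0∞) → YPt τ → ℝ≥0∞) (p : ℝ) : Prop :=
  ∃ C : ℝ≥0∞, C ≠ ∞ ∧ ∀ f, lpp w p (T f) ≤ C * lpp w p f

/-- Weak type `(p,p)` (on the level of `p`-th powers). -/
def weakT {τ : ℕ → ℕ} (w : YPt τ → ℝ≥0∞)
    (T : (YPt τ → ℝ≥0∞) → YPt τ → ℝ≥0∞) (p : ℝ) : Prop :=
  ∃ C : ℝ≥0∞, C ≠ ∞ ∧ ∀ f (l : ℝ≥0∞), l ^ p * mass w {x | l < T f x} ≤ C * lpp w p f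

/-- `‖g‖_{p,∞}^p`. -/
noncomputable def wnormP {τ : ℕ → ℕ} (w : YPt τ → ℝ≥0∞) (p : ℝ) (g : YPt τ → ℝ≥0∞) : ℝ≥0∞ :=
  ⨆ l : ℝ≥0∞, l ^ p * mass w {x | l < g x}

/-- The Dirac function `δ_{y_n}`. -/
noncomputable def dirac (τ : ℕ → ℕ) (n : ℕ) : YPt τ → ℝ≥0∞ :=
  fun x => if x = root τ n then 1 else 0

end SecondGen

open SecondGen



lemma jensen' {ι : Type*} (p : ℝ) (hp : 1 < p) (f w : ι → ℝ≥0∞)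
    (hw : ∀ i, w i ≠ 0 ∧ w i ≠ ∞) :
    ((∑' i, f i * w i) / ∑' i, w i) ^ p * ∑' i, w i ≤ ∑' i, f i ^ p * w i := by
  have hp0 : (0:ℝ) < p := by linarith
  set m := ∑' i, w i with hm_def
  set A := ∑' i, f i ^ p * w i with hA_def
  rcases eq_or_ne m 0 with hm | hm
  · rw [hm, mul_zero]; exact zero_le
  rcases eq_or_ne m ∞ with hm' | hm'
  · rw [hm', ENNReal.div_top, ENNReal.zero_rpow_of_pos hp0, zero_mul]; exact zero_le
  rcases eq_or_ne A ∞ with hA | hA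
  · rw [hA]; exact le_top
  have h1 : (0:ℝ) ≤ 1/p := by positivity
  have h2 : (0:ℝ) ≤ 1 - 1/p := by
    rw [sub_nonneg]; rw [div_le_one hp0]; linarith
  have hN : (∑' i, f i * w i) ≤ A ^ (1/p) * m ^ (1-1/p) := by
    letI : MeasurableSpace ι := ⊤
    haveI : MeasurableSingletonClass ι := ⟨fun _ => trivial⟩
    have H := ENNReal.lintegral_mul_norm_pow_le (μ := MeasureTheory.Measure.count)
        (f := fun i => f i ^ p * w i) (g := w)
        measurable_from_top.aemeasurable measurable_from_top.aemeasurable h1 h2 (by ring)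
    rw [MeasureTheory.lintegral_count, MeasureTheory.lintegral_count,
      MeasureTheory.lintegral_count] at H
    calc (∑' i, f i * w i)
        = ∑' i, (f i ^ p * w i) ^ (1/p) * w i ^ (1 - 1/p) := by
          refine tsum_congr fun i => ?_
          rw [ENNReal.mul_rpow_of_nonneg _ _ h1, mul_assoc,
            ← ENNReal.rpow_add_of_nonneg _ _ h1 h2, ← ENNReal.rpow_mul]
          norm_num
          rw [mul_inv_cancel₀ hp0.ne', ENNReal.rpow_one]
      _ ≤ A ^ (1/p) * m ^ (1-1/p) := H
  have h1top : A ^ (1/p) ≠ ∞ := ENNReal.rpow_ne_top_of_nonneg h1 hA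
  have h2top : m ^ (1-1/p) ≠ ∞ := ENNReal.rpow_ne_top_of_nonneg h2 hm'
  have hXp : (A ^ (1/p) * m ^ (1-1/p)) ^ p = A * m ^ (p-1) := by
    rw [ENNReal.mul_rpow_of_ne_top h1top h2top, ← ENNReal.rpow_mul, ← ENNReal.rpow_mul,
      one_div_mul_cancel hp0.ne', ENNReal.rpow_one]
    congr 1
    field_simp
  have e1 : m ^ (p-1) * m = m ^ p := by
    nth_rewrite 2 [← ENNReal.rpow_one m]
    rw [← ENNReal.rpow_add _ _ hm hm']
    norm_num
  have hmp0 : m ^ p ≠ 0 := (ENNReal.rpow_pos (pos_iff_ne_zero.mpr hm) hm').ne'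
  have hmpt : m ^ p ≠ ∞ := ENNReal.rpow_ne_top_of_nonneg hp0.le hm'
  calc ((∑' i, f i * w i) / m) ^ p * m
      ≤ ((A ^ (1/p) * m ^ (1-1/p)) / m) ^ p * m := by gcongr
    _ = (A ^ (1/p) * m ^ (1-1/p)) ^ p * (m ^ p)⁻¹ * m := by
        rw [div_eq_mul_inv, ENNReal.mul_rpow_of_nonneg _ _ hp0.le, ENNReal.inv_rpow]
    _ = A * (m ^ (p-1) * m) * (m ^ p)⁻¹ := by rw [hXp]; ring
    _ = A * (m ^ p * (m ^ p)⁻¹) := by rw [e1]; ring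
    _ = A := by rw [ENNReal.mul_inv_cancel hmp0 hmpt, mul_one]


lemma anti_rpow {p : ℝ} (hp : 1 < p) {x y : ℝ≥0∞} (hx : x ≠ 0) (hxy : x ≤ y) :
    y ^ (1-p) ≤ x ^ (1-p) := by
  rw [show (1-p) = -(p-1) by ring, ENNReal.rpow_neg, ENNReal.rpow_neg]
  exact ENNReal.inv_le_inv.2 (ENNReal.rpow_le_rpow hxy (by linarith))

lemma key_term {p : ℝ} (hp : 1 < p) (t v e m : ℝ≥0∞)
    (hv0 : v ≠ 0) (hv' : v ≠ ∞) (he0 : e ≠ 0) (he' : e ≠ ∞)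
    (hm0 : m ≠ 0) (hm' : m ≠ ∞) (hve : v * e ≤ m) :
    (t * v / m) ^ p * m ≤ t ^ p * (v * e ^ (1-p)) := by
  have hp0 : (0:ℝ) < p := by linarith
  have step1 : (t * v / m) ^ p * m = t ^ p * (v ^ p * ((m ^ p)⁻¹ * m)) := by
    rw [div_eq_mul_inv, ENNReal.mul_rpow_of_nonneg _ _ hp0.le,
      ENNReal.mul_rpow_of_nonneg _ _ hp0.le, ENNReal.inv_rpow]
    ring
  rw [step1]
  refine mul_le_mul_right ?_ _
  have e2 : (m ^ p)⁻¹ * m = m ^ (1-p) := by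
    rw [show (1-p) = 1 + -p by ring, ENNReal.rpow_add _ _ hm0 hm', ENNReal.rpow_one,
      ENNReal.rpow_neg, mul_comm]
  rw [e2]
  calc v ^ p * m ^ (1-p) ≤ v ^ p * (v * e) ^ (1-p) := by
        refine mul_le_mul_right (anti_rpow hp (mul_ne_zero hv0 he0) hve) _
    _ = v ^ p * (v ^ (1-p) * e ^ (1-p)) := by rw [ENNReal.mul_rpow_of_ne_top hv' he']
    _ = (v ^ p * v ^ (1-p)) * e ^ (1-p) := by ring
    _ = v * e ^ (1-p) := by
        rw [← ENNReal.rpow_add _ _ hv0 hv']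
        norm_num

lemma three_rpow {p : ℝ} (hp : 0 ≤ p) (x y z : ℝ≥0∞) :
    (x + y + z) ^ p ≤ 3 ^ p * (x ^ p + y ^ p + z ^ p) := by
  have hM : x + y + z ≤ 3 * (x ⊔ (y ⊔ z)) := by
    have hx : x ≤ x ⊔ (y ⊔ z) := le_sup_left
    have hy : y ≤ x ⊔ (y ⊔ z) := le_sup_of_le_right le_sup_left
    have hz : z ≤ x ⊔ (y ⊔ z) := le_sup_of_le_right le_sup_right
    calc x + y + z ≤ (x ⊔ (y ⊔ z)) + (x ⊔ (y ⊔ z)) + (x ⊔ (y ⊔ z)) := by gcongr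
      _ = 3 * (x ⊔ (y ⊔ z)) := by ring
  calc (x + y + z) ^ p ≤ (3 * (x ⊔ (y ⊔ z))) ^ p := ENNReal.rpow_le_rpow hM hp
    _ = 3 ^ p * (x ⊔ (y ⊔ z)) ^ p := ENNReal.mul_rpow_of_nonneg _ _ hp
    _ ≤ 3 ^ p * (x ^ p + y ^ p + z ^ p) := by
        refine mul_le_mul_right ?_ _
        rcases le_total x (y ⊔ z) with h | h
        · rw [sup_eq_right.2 h]
          rcases le_total y z with h' | h'
          · rw [sup_eq_right.2 h']; exact le_add_self
          · rw [sup_eq_left.2 h']; exact le_add_right le_add_self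
        · rw [sup_eq_left.2 h]; exact le_add_right le_self_add

lemma tsum_set_singleton' {α : Type*} (a : α) (g : α → ℝ≥0∞) :
    ∑' x : ({a} : Set α), g x = g a := by
  rw [tsum_subtype]
  rw [tsum_eq_single a (fun b hb => Set.indicator_of_notMem (by simp [hb]) g)]
  simp

lemma tsum_set_triple {α : Type*} {a b c : α} (hab : a ≠ b) (hac : a ≠ c) (hbc : b ≠ c)
    (g : α → ℝ≥0∞) :
    ∑' x : ({a, b, c} : Set α), g x = g a + g b + g c := by
  rw [tsum_subtype]
  rw [tsum_eq_sum (s := ({a, b, c} : Finset α))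
    (fun x hx => Set.indicator_of_notMem (by simpa using hx) g)]
  rw [Finset.sum_insert (by simp [hab, hac]), Finset.sum_insert (by simp [hbc]),
    Finset.sum_singleton]
  simp [Set.indicator_of_mem, add_assoc]


lemma tau_pos {p : ℝ} (hp : 1 < p) (n : ℕ) : 1 ≤ ⌊((n : ℝ) + 2) ^ p / ((n : ℝ) + 1)⌋₊ := by
  have hn : (0:ℝ) ≤ (n:ℝ) := Nat.cast_nonneg n
  have h2 : (1:ℝ) ≤ (n:ℝ) + 2 := by linarith
  have hb : ((n:ℝ) + 1) ≤ ((n:ℝ) + 2) ^ p := by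
    calc ((n:ℝ) + 1) ≤ (n:ℝ) + 2 := by linarith
      _ = ((n:ℝ) + 2) ^ (1:ℝ) := (Real.rpow_one _).symm
      _ ≤ ((n:ℝ) + 2) ^ p := Real.rpow_le_rpow_of_exponent_le h2 hp.le
  refine Nat.le_floor ?_
  rw [Nat.cast_one, le_div_iff₀ (by positivity), one_mul]
  exact hb

lemma tau_bound {p : ℝ} (hp : 1 < p) (n : ℕ) :
    ((⌊((n : ℝ) + 2) ^ p / ((n : ℝ) + 1)⌋₊ : ℝ≥0∞)) * ((n : ℝ≥0∞) + 2) ^ (1 - p) ≤ 2 := by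
  set t : ℕ := ⌊((n : ℝ) + 2) ^ p / ((n : ℝ) + 1)⌋₊ with ht
  have hr0 : (0:ℝ) < (n:ℝ) + 2 := by positivity
  have h2 : ((n:ℝ) + 2) ^ p = ((n:ℝ) + 2) ^ (p-1) * ((n:ℝ) + 2) := by
    conv_lhs => rw [show p = (p-1) + 1 by ring]
    rw [Real.rpow_add_one hr0.ne']
  have hreal : (t : ℝ) ≤ 2 * ((n:ℝ) + 2) ^ (p - 1) := by
    have h1 : (t:ℝ) ≤ ((n : ℝ) + 2) ^ p / ((n : ℝ) + 1) := Nat.floor_le (by positivity)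
    have hn : (0:ℝ) ≤ (n:ℝ) := Nat.cast_nonneg n
    calc (t:ℝ) ≤ ((n : ℝ) + 2) ^ p / ((n : ℝ) + 1) := h1
      _ = ((n:ℝ) + 2) ^ (p-1) * (((n:ℝ) + 2) / ((n:ℝ) + 1)) := by rw [h2]; ring
      _ ≤ ((n:ℝ) + 2) ^ (p-1) * 2 := by
          refine mul_le_mul_of_nonneg_left ?_ (Real.rpow_nonneg hr0.le _)
          rw [div_le_iff₀ (by positivity)]; linarith
      _ = 2 * ((n:ℝ) + 2) ^ (p - 1) := by ring
  have hofreal : ((t : ℝ≥0∞)) ≤ 2 * ((n : ℝ≥0∞) + 2) ^ (p - 1) := by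
    have e2 : ENNReal.ofReal ((n:ℝ) + 2) = (n : ℝ≥0∞) + 2 := by
      rw [show ((n:ℝ) + 2) = (((n + 2 : ℕ)) : ℝ) by push_cast; ring, ENNReal.ofReal_natCast]
      push_cast
      ring
    calc ((t : ℝ≥0∞)) = ENNReal.ofReal (t : ℝ) := (ENNReal.ofReal_natCast t).symm
      _ ≤ ENNReal.ofReal (2 * ((n:ℝ) + 2) ^ (p - 1)) := ENNReal.ofReal_le_ofReal hreal
      _ = ENNReal.ofReal 2 * ENNReal.ofReal (((n:ℝ) + 2) ^ (p - 1)) :=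
          ENNReal.ofReal_mul (by norm_num)
      _ = 2 * ((n : ℝ≥0∞) + 2) ^ (p - 1) := by
          rw [← ENNReal.ofReal_rpow_of_pos hr0, e2, ENNReal.ofReal_ofNat]
  have h20 : (0:ℝ≥0∞) < 2 := by norm_num
  have hne0 : ((n : ℝ≥0∞) + 2) ≠ 0 := (h20.trans_le le_add_self).ne'
  have hnet : ((n : ℝ≥0∞) + 2) ≠ ∞ :=
    ENNReal.add_ne_top.2 ⟨ENNReal.natCast_ne_top n, by norm_num⟩
  calc (t : ℝ≥0∞) * ((n : ℝ≥0∞) + 2) ^ (1 - p)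
      ≤ 2 * ((n : ℝ≥0∞) + 2) ^ (p - 1) * ((n : ℝ≥0∞) + 2) ^ (1 - p) := by gcongr
    _ = 2 * (((n : ℝ≥0∞) + 2) ^ ((p - 1) + (1 - p))) := by
        rw [ENNReal.rpow_add _ _ hne0 hnet]; ring
    _ = 2 := by norm_num

lemma family_eq {ι : Type*} {X : Type*} (w : X → ℝ≥0∞) (c : ι → ℝ≥0∞) (B : ι → Set X) :
    ∑' x, (∑' n, (B n).indicator (fun _ => c n) x) * w x
      = ∑' n, c n * ∑' y : (B n), w y.1 := by
  calc ∑' x, (∑' n, (B n).indicator (fun _ => c n) x) * w x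
      = ∑' x, ∑' n, (B n).indicator (fun _ => c n) x * w x := by
        refine tsum_congr fun x => ?_; exact ENNReal.tsum_mul_right.symm
    _ = ∑' n, ∑' x, (B n).indicator (fun _ => c n) x * w x := ENNReal.tsum_comm
    _ = ∑' n, c n * ∑' y : (B n), w y.1 := by
        refine tsum_congr fun n => ?_
        rw [tsum_subtype]
        rw [← ENNReal.tsum_mul_left]
        refine tsum_congr fun x => ?_
        simp only [Set.indicator_apply]
        split_ifs <;> simp

lemma family_le {ι : Type*} {X : Type*} (h : X → ℝ≥0∞) (B : ι → Set X)
    (huniq : ∀ x (n n' : ι), x ∈ B n → x ∈ B n' → n = n') :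
    ∑' n, ∑' y : (B n), h y.1 ≤ ∑' x, h x := by
  have e : ∀ n : ι, ∑' y : (B n), h y.1 = ∑' x, (B n).indicator h x :=
    fun n => tsum_subtype _ _
  rw [tsum_congr e, ENNReal.tsum_comm]
  refine ENNReal.tsum_le_tsum fun x => ?_
  by_cases hx : ∃ n, x ∈ B n
  · rcases hx with ⟨n0, hn0⟩
    rw [tsum_eq_single n0
      (fun n hn => Set.indicator_of_notMem (fun hmem => hn (huniq x n n0 hmem hn0)) h)]
    exact Set.indicator_le_self' (fun _ _ => zero_le) x
  · push_neg at hx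
    rw [tsum_congr (fun n => Set.indicator_of_notMem (hx n) h)]
    simp

/-- in the second generation space `Ŷ_{p₀}`, `p₀ ∈ (1,∞)` (branch `n`
here is the paper's branch `n+1`, with `τ n = ⌊(n+2)^{p₀}/(n+1)⌋` and top weights
`(n+1) d n`), the non-centered maximal operator is of strong type `(p₀,p₀)`:
`‖Mf‖_{p₀}^{p₀} ≤ (4 + 2·3^{p₀+1}) ‖f‖_{p₀}^{p₀}` for all `f`. -/
theorem Yhat_noncen_strong (p0 : ℝ) (hp0 : 1 < p0)
    (τ : ℕ → ℕ) (hτ : ∀ n : ℕ, τ n = ⌊((n : ℝ) + 2) ^ p0 / ((n : ℝ) + 1)⌋₊)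
    (d : ℕ → ℝ≥0∞) (hd : ∀ n, 0 < d n ∧ d n ≠ ∞) (hd1 : d 0 = 1)
    (F : (n : ℕ) → Fin (τ n) → ℝ≥0∞) (hF : ∀ n i, F n i = (n : ℝ≥0∞) + 1)
    (hhalf : ∀ n, mass (weight τ d F) (branch τ (n + 1))
      = mass (weight τ d F) (branch τ n) / 2) :
    ∀ f : YPt τ → ℝ≥0∞,
      lpp (weight τ d F) p0 (Mnc (weight τ d F) f)
        ≤ (4 + 2 * 3 ^ (p0 + 1)) * lpp (weight τ d F) p0 f := by
  intro f
  have hp0pos : (0:ℝ) < p0 := by linarith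
  have hp0ne : p0 ≠ 0 := hp0pos.ne'
  set w := weight τ d F with hw_def
  set L := lpp w p0 f with hL_def
  set h : YPt τ → ℝ≥0∞ := fun x => f x ^ p0 * w x with hh_def
  have hLsum : L = ∑' x, h x := rfl
  -- positivity/finiteness of weights
  have hτ1 : ∀ n, 1 ≤ τ n := fun n => by rw [hτ n]; exact tau_pos hp0 n
  have hτ0 : ∀ n, ((τ n : ℝ≥0∞)) ≠ 0 := fun n =>
    Nat.cast_ne_zero.2 (by have := hτ1 n; omega)
  have hwx : ∀ x : YPt τ, w x ≠ 0 ∧ w x ≠ ∞ := by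
    rintro (n | (⟨n, i⟩ | ⟨n, i⟩))
    · exact ⟨(hd n).1.ne', (hd n).2⟩
    · constructor
      · show d n / (τ n : ℝ≥0∞) ≠ 0
        rw [Ne, ENNReal.div_eq_zero_iff]
        push_neg
        exact ⟨(hd n).1.ne', ENNReal.natCast_ne_top _⟩
      · exact (ENNReal.div_lt_top (hd n).2 (hτ0 n)).ne
    · show d n * F n i ≠ 0 ∧ d n * F n i ≠ ∞
      rw [hF n i]
      constructor
      · exact mul_ne_zero (hd n).1.ne' (by simp)
      · exact ENNReal.mul_ne_top (hd n).2
          (ENNReal.add_ne_top.2 ⟨ENNReal.natCast_ne_top n, by norm_num⟩)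
  set G : Set (YPt τ) → ℝ≥0∞ := fun B => avg w f B ^ p0 with hG_def
  -- Jensen for every set
  have jensenB : ∀ B : Set (YPt τ), G B * mass w B ≤ ∑' y : B, h y.1 := by
    intro B
    have := jensen' p0 hp0 (fun y : B => f y.1) (fun y : B => w y.1) (fun y => hwx y.1)
    exact this
  -- the partial maximal sums
  set S2 : YPt τ → ℝ≥0∞ := fun x =>
    ∑' q : (Σ n : ℕ, Fin (τ n)), (triple τ q.1 q.2).indicator
      (fun _ => G (triple τ q.1 q.2)) x with hS2_def
  set S3 : YPt τ → ℝ≥0∞ := fun x =>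
    ∑' q : (Σ n : ℕ, Fin (τ n)), (pairB τ q.1 q.2).indicator
      (fun _ => G (pairB τ q.1 q.2)) x with hS3_def
  set S4 : YPt τ → ℝ≥0∞ := fun x =>
    ∑' n : ℕ, (low τ n).indicator (fun _ => G (low τ n)) x with hS4_def
  set S : YPt τ → ℝ≥0∞ := fun x => G {x} + S2 x + S3 x + S4 x + G univ with hS_def
  -- pointwise bound
  have hpt : ∀ x, Mnc w f x ^ p0 ≤ S x := by
    intro x
    have hle : Mnc w f x ≤ S x ^ p0⁻¹ := by
      refine iSup_le fun B => iSup_le fun hB => iSup_le fun hxB => ?_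
      have hGle : G B ≤ S x := by
        rcases hB with ⟨x0, rfl⟩ | ⟨n, i, rfl⟩ | ⟨n, i, rfl⟩ | ⟨n, rfl⟩ | rfl
        · obtain rfl : x = x0 := hxB
          exact le_add_right (le_add_right (le_add_right le_self_add))
        · have h1 : G (triple τ n i) ≤ S2 x := by
            have := ENNReal.le_tsum (f := fun q : Σ n : ℕ, Fin (τ n) =>
              (triple τ q.1 q.2).indicator (fun _ => G (triple τ q.1 q.2)) x) ⟨n, i⟩
            simpa [Set.indicator_of_mem hxB] using this
          exact h1.trans (le_add_right (le_add_right (le_add_right le_add_self)))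
        · have h1 : G (pairB τ n i) ≤ S3 x := by
            have := ENNReal.le_tsum (f := fun q : Σ n : ℕ, Fin (τ n) =>
              (pairB τ q.1 q.2).indicator (fun _ => G (pairB τ q.1 q.2)) x) ⟨n, i⟩
            simpa [Set.indicator_of_mem hxB] using this
          exact h1.trans (le_add_right (le_add_right le_add_self))
        · have h1 : G (low τ n) ≤ S4 x := by
            have := ENNReal.le_tsum (f := fun n : ℕ =>
              (low τ n).indicator (fun _ => G (low τ n)) x) n
            simpa [Set.indicator_of_mem hxB] using this
          exact h1.trans (le_add_right le_add_self)
        · exact le_add_self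
      calc avg w f B = (G B) ^ p0⁻¹ := (ENNReal.rpow_rpow_inv hp0ne _).symm
        _ ≤ (S x) ^ p0⁻¹ := ENNReal.rpow_le_rpow hGle (by positivity)
    calc Mnc w f x ^ p0 ≤ (S x ^ p0⁻¹) ^ p0 := ENNReal.rpow_le_rpow hle hp0pos.le
      _ = S x := ENNReal.rpow_inv_rpow hp0ne _
  -- term bounds
  have hT1 : ∑' x, G {x} * w x ≤ L := by
    rw [hLsum]
    refine ENNReal.tsum_le_tsum fun x => ?_
    have hm : mass w ({x} : Set (YPt τ)) = w x := tsum_set_singleton' x w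
    calc G {x} * w x = G {x} * mass w {x} := by rw [hm]
      _ ≤ ∑' y : ({x} : Set (YPt τ)), h y.1 := jensenB {x}
      _ = h x := tsum_set_singleton' x h
  have hT5 : ∑' x, G univ * w x ≤ L := by
    rw [hLsum]
    calc ∑' x, G univ * w x = G univ * mass w univ := by
          rw [ENNReal.tsum_mul_left]
          congr 1
          exact (tsum_univ w).symm
      _ ≤ ∑' y : (univ : Set (YPt τ)), h y.1 := jensenB univ
      _ = ∑' x, h x := tsum_univ h
  -- pairs
  have pair_uniq : ∀ (x : YPt τ) (q q' : Σ n : ℕ, Fin (τ n)),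
      x ∈ pairB τ q.1 q.2 → x ∈ pairB τ q'.1 q'.2 → q = q' := by
    intro x q q' hq hq'
    simp only [pairB, Set.mem_insert_iff, Set.mem_singleton_iff] at hq hq'
    rcases hq with rfl | rfl <;> rcases hq' with h' | h' <;>
      simpa [SecondGen.mid, SecondGen.top, Sigma.eta] using h'
  have hT3 : ∑' x, S3 x * w x ≤ L := by
    rw [hS3_def, family_eq w (fun q : Σ n : ℕ, Fin (τ n) => G (pairB τ q.1 q.2))
      (fun q => pairB τ q.1 q.2), hLsum]
    calc ∑' q : Σ n : ℕ, Fin (τ n), G (pairB τ q.1 q.2) * ∑' y : pairB τ q.1 q.2, w y.1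
        ≤ ∑' q : Σ n : ℕ, Fin (τ n), ∑' y : pairB τ q.1 q.2, h y.1 :=
          ENNReal.tsum_le_tsum fun q => jensenB _
      _ ≤ ∑' x, h x := family_le h _ pair_uniq
  -- lows
  have low_uniq : ∀ (x : YPt τ) (n n' : ℕ), x ∈ low τ n → x ∈ low τ n' → n = n' := by
    intro x n n' hn hn'
    simp only [low, Set.mem_setOf_eq] at hn hn'
    rcases hn with rfl | ⟨i, rfl⟩ <;> rcases hn' with h' | ⟨i', h'⟩
    · simpa [root] using h'
    · simp [root, SecondGen.mid] at h'
    · simp [root, SecondGen.mid] at h'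
    · have h2 : (⟨n, i⟩ : Σ n : ℕ, Fin (τ n)) = ⟨n', i'⟩ := by
        simpa [SecondGen.mid] using h'
      exact congrArg Sigma.fst h2
  have hT4 : ∑' x, S4 x * w x ≤ L := by
    rw [hS4_def, family_eq w (fun n : ℕ => G (low τ n)) (fun n => low τ n), hLsum]
    calc ∑' n : ℕ, G (low τ n) * ∑' y : low τ n, w y.1
        ≤ ∑' n : ℕ, ∑' y : low τ n, h y.1 := ENNReal.tsum_le_tsum fun n => jensenB _
      _ ≤ ∑' x, h x := family_le h _ low_uniq
  -- triples
  have hT2 : ∑' x, S2 x * w x ≤ 2 * 3 ^ (p0 + 1) * L := by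
    have hTri : ∀ (n : ℕ) (i : Fin (τ n)),
        G (triple τ n i) * mass w (triple τ n i)
          ≤ 3 ^ p0 * (f (root τ n) ^ p0 * (d n * ((n : ℝ≥0∞) + 2) ^ (1 - p0))
              + h (SecondGen.mid τ n i) + h (SecondGen.top τ n i)) := by
      intro n i
      have hne1 : root τ n ≠ SecondGen.mid τ n i := by simp [root, SecondGen.mid]
      have hne2 : root τ n ≠ SecondGen.top τ n i := by simp [root, SecondGen.top]
      have hne3 : SecondGen.mid τ n i ≠ SecondGen.top τ n i := by
        simp [SecondGen.mid, SecondGen.top]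
      set wa := d n with hwa
      set wb := d n / (τ n : ℝ≥0∞) with hwb
      set wc := d n * ((n : ℝ≥0∞) + 1) with hwc
      have hwr : w (root τ n) = wa := rfl
      have hwm : w (SecondGen.mid τ n i) = wb := rfl
      have hwt : w (SecondGen.top τ n i) = wc := by
        show d n * F n i = wc
        rw [hF n i]
      set a := f (root τ n) with ha
      set b := f (SecondGen.mid τ n i) with hb
      set c := f (SecondGen.top τ n i) with hc
      have hmass : mass w (triple τ n i) = wa + wb + wc := by
        show (∑' y : ({root τ n, SecondGen.mid τ n i, SecondGen.top τ n i} : Set (YPt τ)),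
          w y.1) = _
        rw [tsum_set_triple hne1 hne2 hne3 w, hwr, hwm, hwt]
      have hnum : (∑' y : (triple τ n i : Set (YPt τ)), f y.1 * w y.1)
          = a * wa + b * wb + c * wc := by
        show (∑' y : ({root τ n, SecondGen.mid τ n i, SecondGen.top τ n i} : Set (YPt τ)),
          f y.1 * w y.1) = _
        rw [tsum_set_triple hne1 hne2 hne3 (fun y => f y * w y)]
        rw [hwr, hwm, hwt]
      set m := wa + wb + wc with hm
      have havg : avg w f (triple τ n i) = (a * wa + b * wb + c * wc) / m := by
        show (∑' y : (triple τ n i : Set (YPt τ)), f y.1 * w y.1) / mass w (triple τ n i) = _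
        rw [hnum, hmass]
      have hwa0 : wa ≠ 0 := (hd n).1.ne'
      have hwat : wa ≠ ∞ := (hd n).2
      have hwb0 : wb ≠ 0 := by
        rw [hwb, Ne, ENNReal.div_eq_zero_iff]
        push_neg
        exact ⟨(hd n).1.ne', ENNReal.natCast_ne_top _⟩
      have hwbt : wb ≠ ∞ := (ENNReal.div_lt_top (hd n).2 (hτ0 n)).ne
      have hwc0 : wc ≠ 0 := mul_ne_zero (hd n).1.ne' (by simp)
      have hwct : wc ≠ ∞ := ENNReal.mul_ne_top (hd n).2
        (ENNReal.add_ne_top.2 ⟨ENNReal.natCast_ne_top n, by norm_num⟩)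
      have hm0 : m ≠ 0 := by
        have h1 : 0 < wa := (hd n).1
        exact (h1.trans_le (le_add_right le_self_add)).ne'
      have hmt : m ≠ ∞ := by
        rw [hm]
        exact ENNReal.add_ne_top.2 ⟨ENNReal.add_ne_top.2 ⟨hwat, hwbt⟩, hwct⟩
      have he20 : ((n : ℝ≥0∞) + 2) ≠ 0 :=
        (((by norm_num : (0:ℝ≥0∞) < 2)).trans_le le_add_self).ne'
      have he2t : ((n : ℝ≥0∞) + 2) ≠ ∞ :=
        ENNReal.add_ne_top.2 ⟨ENNReal.natCast_ne_top n, by norm_num⟩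
      have hvea : wa * ((n : ℝ≥0∞) + 2) ≤ m := by
        have e : wa * ((n : ℝ≥0∞) + 2) = wa + wc := by rw [hwc]; ring
        rw [e, hm]
        exact add_le_add_left le_self_add wc
      have hveb : wb * 1 ≤ m := by rw [mul_one, hm]; exact le_add_right le_add_self
      have hvec : wc * 1 ≤ m := by rw [mul_one, hm]; exact le_add_self
      have e3 : h (SecondGen.top τ n i) = c ^ p0 * wc := by
        show f (SecondGen.top τ n i) ^ p0 * (d n * F n i) = _
        rw [hF n i]
      have e4 : h (SecondGen.mid τ n i) = b ^ p0 * wb := rfl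
      calc G (triple τ n i) * mass w (triple τ n i)
          = (a * wa / m + b * wb / m + c * wc / m) ^ p0 * m := by
            show avg w f (triple τ n i) ^ p0 * mass w (triple τ n i) = _
            rw [havg, hmass, ENNReal.add_div, ENNReal.add_div]
        _ ≤ 3 ^ p0 * ((a * wa / m) ^ p0 + (b * wb / m) ^ p0 + (c * wc / m) ^ p0) * m :=
            mul_le_mul_left (three_rpow hp0pos.le _ _ _) m
        _ = 3 ^ p0 * ((a * wa / m) ^ p0 * m + (b * wb / m) ^ p0 * m
              + (c * wc / m) ^ p0 * m) := by ring
        _ ≤ 3 ^ p0 * (a ^ p0 * (wa * ((n : ℝ≥0∞) + 2) ^ (1 - p0))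
              + b ^ p0 * (wb * (1:ℝ≥0∞) ^ (1 - p0)) + c ^ p0 * (wc * (1:ℝ≥0∞) ^ (1 - p0))) := by
            refine mul_le_mul_right (add_le_add (add_le_add ?_ ?_) ?_) _
            · exact key_term hp0 a wa ((n : ℝ≥0∞) + 2) m hwa0 hwat he20 he2t hm0 hmt hvea
            · exact key_term hp0 b wb 1 m hwb0 hwbt one_ne_zero ENNReal.one_ne_top hm0 hmt hveb
            · exact key_term hp0 c wc 1 m hwc0 hwct one_ne_zero ENNReal.one_ne_top hm0 hmt hvec
        _ = 3 ^ p0 * (a ^ p0 * (wa * ((n : ℝ≥0∞) + 2) ^ (1 - p0))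
              + h (SecondGen.mid τ n i) + h (SecondGen.top τ n i)) := by
            rw [ENNReal.one_rpow, mul_one, mul_one, e3, e4]
    have inj_root : Function.Injective (root τ) := fun a b hab => Sum.inl_injective hab
    have inj_mid : Function.Injective
        (fun q : Σ n : ℕ, Fin (τ n) => SecondGen.mid τ q.1 q.2) := by
      intro q q' hqq
      exact Sum.inl_injective (Sum.inr_injective hqq)
    have inj_top : Function.Injective
        (fun q : Σ n : ℕ, Fin (τ n) => SecondGen.top τ q.1 q.2) := by
      intro q q' hqq
      exact Sum.inr_injective (Sum.inr_injective hqq)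
    have hroots : ∑' n : ℕ, h (root τ n) ≤ L := by
      rw [hLsum]; exact ENNReal.tsum_comp_le_tsum_of_injective inj_root h
    have hmids : ∑' n : ℕ, ∑ i : Fin (τ n), h (SecondGen.mid τ n i) ≤ L := by
      rw [hLsum]
      have e : ∀ n : ℕ, ∑ i : Fin (τ n), h (SecondGen.mid τ n i)
          = ∑' i : Fin (τ n), h (SecondGen.mid τ n i) := fun n => (tsum_fintype _).symm
      rw [tsum_congr e, ← ENNReal.tsum_sigma' (fun q : Σ n : ℕ, Fin (τ n) =>
        h (SecondGen.mid τ q.1 q.2))]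
      exact ENNReal.tsum_comp_le_tsum_of_injective inj_mid h
    have htops : ∑' n : ℕ, ∑ i : Fin (τ n), h (SecondGen.top τ n i) ≤ L := by
      rw [hLsum]
      have e : ∀ n : ℕ, ∑ i : Fin (τ n), h (SecondGen.top τ n i)
          = ∑' i : Fin (τ n), h (SecondGen.top τ n i) := fun n => (tsum_fintype _).symm
      rw [tsum_congr e, ← ENNReal.tsum_sigma' (fun q : Σ n : ℕ, Fin (τ n) =>
        h (SecondGen.top τ q.1 q.2))]
      exact ENNReal.tsum_comp_le_tsum_of_injective inj_top h
    rw [hS2_def, family_eq w (fun q : Σ n : ℕ, Fin (τ n) => G (triple τ q.1 q.2))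
      (fun q => triple τ q.1 q.2)]
    calc ∑' q : Σ n : ℕ, Fin (τ n), G (triple τ q.1 q.2) * ∑' y : triple τ q.1 q.2, w y.1
        ≤ ∑' q : Σ n : ℕ, Fin (τ n), 3 ^ p0 * (f (root τ q.1) ^ p0
            * (d q.1 * ((q.1 : ℝ≥0∞) + 2) ^ (1 - p0))
            + h (SecondGen.mid τ q.1 q.2) + h (SecondGen.top τ q.1 q.2)) :=
          ENNReal.tsum_le_tsum fun q => hTri q.1 q.2
      _ = ∑' n : ℕ, ∑ i : Fin (τ n), 3 ^ p0 * (f (root τ n) ^ p0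
            * (d n * ((n : ℝ≥0∞) + 2) ^ (1 - p0))
            + h (SecondGen.mid τ n i) + h (SecondGen.top τ n i)) := by
          rw [ENNReal.tsum_sigma']
          exact tsum_congr fun n => tsum_fintype _
      _ ≤ ∑' n : ℕ, 3 ^ p0 * (2 * h (root τ n) + (∑ i : Fin (τ n), h (SecondGen.mid τ n i)
            + ∑ i : Fin (τ n), h (SecondGen.top τ n i))) := by
          refine ENNReal.tsum_le_tsum fun n => ?_
          rw [← Finset.mul_sum]
          refine mul_le_mul_right ?_ _
          rw [Finset.sum_add_distrib, Finset.sum_add_distrib, Finset.sum_const,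
            Finset.card_univ, Fintype.card_fin, nsmul_eq_mul, add_assoc]
          refine add_le_add ?_ le_rfl
          have hb' : (τ n : ℝ≥0∞) * ((n : ℝ≥0∞) + 2) ^ (1 - p0) ≤ 2 := by
            rw [hτ n]; exact tau_bound hp0 n
          have hroot : h (root τ n) = f (root τ n) ^ p0 * d n := rfl
          calc (τ n : ℝ≥0∞) * (f (root τ n) ^ p0 * (d n * ((n : ℝ≥0∞) + 2) ^ (1 - p0)))
              = f (root τ n) ^ p0 * d n * ((τ n : ℝ≥0∞) * ((n : ℝ≥0∞) + 2) ^ (1 - p0)) := by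
                ring
            _ ≤ f (root τ n) ^ p0 * d n * 2 := mul_le_mul_right hb' _
            _ = 2 * h (root τ n) := by rw [hroot]; ring
      _ = 3 ^ p0 * 2 * (∑' n : ℕ, h (root τ n))
            + (3 ^ p0 * ∑' n : ℕ, ∑ i : Fin (τ n), h (SecondGen.mid τ n i)
              + 3 ^ p0 * ∑' n : ℕ, ∑ i : Fin (τ n), h (SecondGen.top τ n i)) := by
          have e : ∀ n : ℕ, 3 ^ p0 * (2 * h (root τ n)
              + (∑ i : Fin (τ n), h (SecondGen.mid τ n i)
                + ∑ i : Fin (τ n), h (SecondGen.top τ n i)))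
              = 3 ^ p0 * 2 * h (root τ n)
                + (3 ^ p0 * ∑ i : Fin (τ n), h (SecondGen.mid τ n i)
                  + 3 ^ p0 * ∑ i : Fin (τ n), h (SecondGen.top τ n i)) := fun n => by ring
          rw [tsum_congr e, ENNReal.tsum_add, ENNReal.tsum_add, ENNReal.tsum_mul_left,
            ENNReal.tsum_mul_left, ENNReal.tsum_mul_left]
      _ ≤ 3 ^ p0 * 2 * L + (3 ^ p0 * L + 3 ^ p0 * L) := by gcongr
      _ = 4 * 3 ^ p0 * L := by ring
      _ ≤ 2 * 3 ^ (p0 + 1) * L := by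
          have e : (3:ℝ≥0∞) ^ (p0 + 1) = 3 ^ p0 * 3 := by
            rw [ENNReal.rpow_add _ _ (by norm_num) (by norm_num), ENNReal.rpow_one]
          rw [e]
          calc 4 * 3 ^ p0 * L ≤ 6 * 3 ^ p0 * L := by
                refine mul_le_mul_left (mul_le_mul_left (by norm_num) _) _
            _ = 2 * (3 ^ p0 * 3) * L := by ring
  -- conclusion
  calc lpp w p0 (Mnc w f) = ∑' x, Mnc w f x ^ p0 * w x := rfl
    _ ≤ ∑' x, S x * w x := ENNReal.tsum_le_tsum fun x => mul_le_mul_left (hpt x) _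
    _ = ∑' x, (G {x} * w x + S2 x * w x + S3 x * w x + S4 x * w x + G univ * w x) := by
        refine tsum_congr fun x => ?_
        rw [hS_def]
        ring
    _ = ∑' x, G {x} * w x + ∑' x, S2 x * w x + ∑' x, S3 x * w x + ∑' x, S4 x * w x
          + ∑' x, G univ * w x := by
        rw [ENNReal.tsum_add, ENNReal.tsum_add, ENNReal.tsum_add, ENNReal.tsum_add]
    _ ≤ L + 2 * 3 ^ (p0 + 1) * L + L + L + L :=
        add_le_add (add_le_add (add_le_add (add_le_add hT1 hT2) hT3) hT4) hT5
    _ = (4 + 2 * 3 ^ (p0 + 1)) * L := by ring
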